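/- In the group G = ⟨x, y, z : xy²x⁻¹y² = yx²y⁻¹x² = xyz = 1⟩, the quotient G/⟨x², y², z²⟩ is isomorphic to the Klein four-group ℤ₂ × ℤ₂. -/

import Mathlib

/-- The relations of the Hantzsche–Wendt group:
`x y² x⁻¹ y² = 1`, `y x² y⁻¹ x² = 1`, `x y z = 1`, with `x, y, z` the generators `0, 1, 2`. -/
def hwRels : Set (FreeGroup (Fin 3)) :=
  { FreeGroup.of 0 * FreeGroup.of 1 ^ 2 * (FreeGroup.of 0)⁻¹ * FreeGroup.of 1 ^ 2,
    FreeGroup.of 1 * FreeGroup.of 0 ^ 2 * (FreeGroup.of 1)⁻¹ * FreeGroup.of 0 ^ 2,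
    FreeGroup.of 0 * FreeGroup.of 1 * FreeGroup.of 2 }

/-- The fundamental group of the Hantzsche–Wendt manifold `𝒢₆`. -/
abbrev HW : Type := PresentedGroup hwRels

def hwx : HW := PresentedGroup.of 0
def hwy : HW := PresentedGroup.of 1
def hwz : HW := PresentedGroup.of 2

namespace HWaux

abbrev K : Type := Multiplicative (ZMod 2 × ZMod 2)

def f : Fin 3 → K := ![Multiplicative.ofAdd (1, 0), Multiplicative.ofAdd (0, 1),
  Multiplicative.ofAdd (1, 1)]

lemma frels : ∀ r ∈ hwRels, FreeGroup.lift f r = 1 := by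
  intro r hr
  rcases hr with h | h | h <;> subst h <;> simp [f] <;> decide

def φ0 : HW →* K := PresentedGroup.toGroup frels

abbrev N : Subgroup HW := Subgroup.normalClosure {hwx ^ 2, hwy ^ 2, hwz ^ 2}

abbrev Q : Type := HW ⧸ N

lemma sq_ker : ∀ g ∈ ({hwx ^ 2, hwy ^ 2, hwz ^ 2} : Set HW), φ0 g = 1 := by
  intro g hg
  rcases hg with h | h | h <;> subst h <;>
    simp [hwx, hwy, hwz, φ0, f] <;> decide

lemma N_le_ker : N ≤ φ0.ker :=
  Subgroup.normalClosure_le_normal fun x hx => MonoidHom.mem_ker.2 (sq_ker x hx)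

def φ : Q →* K := QuotientGroup.lift N φ0 fun x hx => MonoidHom.mem_ker.1 (N_le_ker hx)

def X : Q := QuotientGroup.mk hwx
def Y : Q := QuotientGroup.mk hwy
def Z : Q := QuotientGroup.mk hwz

lemma hX2 : X ^ 2 = 1 := by
  rw [X, ← QuotientGroup.mk_pow, QuotientGroup.eq_one_iff]
  exact Subgroup.subset_normalClosure (by left; rfl)

lemma hY2 : Y ^ 2 = 1 := by
  rw [Y, ← QuotientGroup.mk_pow, QuotientGroup.eq_one_iff]
  exact Subgroup.subset_normalClosure (by right; left; rfl)

lemma hZ2 : Z ^ 2 = 1 := by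
  rw [Z, ← QuotientGroup.mk_pow, QuotientGroup.eq_one_iff]
  exact Subgroup.subset_normalClosure (by right; right; rfl)

lemma hXYZ : X * Y * Z = 1 := by
  have h1 : (hwx * hwy * hwz : HW) = 1 := by
    show PresentedGroup.mk hwRels (FreeGroup.of 0 * FreeGroup.of 1 * FreeGroup.of 2) = 1
    rw [show (1 : HW) = PresentedGroup.mk hwRels 1 from rfl]
    apply (QuotientGroup.eq_iff_div_mem ..).2
    simpa using Subgroup.subset_normalClosure (show _ ∈ hwRels by right; right; rfl)
  calc X * Y * Z = (QuotientGroup.mk (hwx * hwy * hwz) : Q) := rfl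
    _ = 1 := by rw [h1]; rfl

lemma hXinv : X⁻¹ = X := by
  rw [inv_eq_iff_mul_eq_one, ← sq, hX2]
lemma hYinv : Y⁻¹ = Y := by
  rw [inv_eq_iff_mul_eq_one, ← sq, hY2]

lemma hZeq : Z = (X * Y)⁻¹ := (inv_eq_of_mul_eq_one_right hXYZ).symm

lemma hcomm : Y * X = X * Y := by
  have h := hZ2
  rw [hZeq] at h
  have h2 : (X * Y)⁻¹ = X * Y := by
    rw [inv_eq_iff_mul_eq_one, ← sq]
    rwa [inv_pow, inv_eq_one] at h
  calc Y * X = Y⁻¹ * X⁻¹ := by rw [hXinv, hYinv]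
    _ = (X * Y)⁻¹ := by group
    _ = X * Y := h2

lemma hXYself : (X * Y)⁻¹ = X * Y := by
  rw [inv_eq_iff_mul_eq_one, ← sq]
  have h := hZ2
  rw [hZeq] at h
  rwa [inv_pow, inv_eq_one] at h

lemma hZXY : Z = X * Y := by rw [hZeq, hXYself]

lemma hXYcomm : Commute X Y := hcomm.symm

lemma keyX (a c : ZMod 2) : X ^ (a + c).val = X ^ a.val * X ^ c.val := by
  rw [← pow_add, pow_eq_pow_mod (a + c).val hX2, ZMod.val_add]
  conv_rhs => rw [pow_eq_pow_mod (a.val + c.val) hX2]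
  congr 1
  omega

lemma keyY (a c : ZMod 2) : Y ^ (a + c).val = Y ^ a.val * Y ^ c.val := by
  rw [← pow_add, pow_eq_pow_mod (a + c).val hY2, ZMod.val_add]
  conv_rhs => rw [pow_eq_pow_mod (a.val + c.val) hY2]
  congr 1
  omega

def ψ : K →* Q :=
  MonoidHom.mk' (fun k => X ^ (Multiplicative.toAdd k).1.val *
      Y ^ (Multiplicative.toAdd k).2.val) (by
    intro k l
    show X ^ ((Multiplicative.toAdd k).1 + (Multiplicative.toAdd l).1).val *
        Y ^ ((Multiplicative.toAdd k).2 + (Multiplicative.toAdd l).2).val = _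
    rw [keyX, keyY]
    exact (hXYcomm.pow_pow _ _).mul_mul_mul_comm _ _)

lemma ψ_apply (a b : ZMod 2) :
    ψ (Multiplicative.ofAdd (a, b)) = X ^ a.val * Y ^ b.val := rfl

lemma cases2 : ∀ a : ZMod 2, a = 0 ∨ a = 1 := by decide

lemma φX : φ X = Multiplicative.ofAdd (1, 0) := by
  show φ0 hwx = _
  simp [hwx, φ0, f]

lemma φY : φ Y = Multiplicative.ofAdd (0, 1) := by
  show φ0 hwy = _
  simp [hwy, φ0, f]

lemma left_inv : φ.comp ψ = MonoidHom.id K := by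
  apply MonoidHom.ext
  intro k
  have hk : k = Multiplicative.ofAdd ((Multiplicative.toAdd k).1,
      (Multiplicative.toAdd k).2) := rfl
  rw [hk]
  rcases cases2 (Multiplicative.toAdd k).1 with h1 | h1 <;>
    rcases cases2 (Multiplicative.toAdd k).2 with h2 | h2 <;>
    rw [h1, h2] <;>
    simp only [MonoidHom.comp_apply, MonoidHom.id_apply, ψ_apply,
      ZMod.val_zero, ZMod.val_one, pow_zero, pow_one, mul_one, one_mul,
      map_mul, map_one, φX, φY] <;> decide

lemma right_inv : ψ.comp φ = MonoidHom.id Q := by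
  have H : (ψ.comp φ).comp (QuotientGroup.mk' N) = QuotientGroup.mk' N := by
    apply PresentedGroup.ext
    intro i
    fin_cases i
    · show ψ (φ X) = X
      rw [φX, ψ_apply]
      simp [show ((1 : ZMod 2)).val = 1 from rfl, show ((0 : ZMod 2)).val = 0 from rfl]
    · show ψ (φ Y) = Y
      rw [φY, ψ_apply]
      simp [show ((1 : ZMod 2)).val = 1 from rfl, show ((0 : ZMod 2)).val = 0 from rfl]
    · show ψ (φ Z) = Z
      have hφZ : φ Z = Multiplicative.ofAdd (1, 1) := by
        rw [hZXY, map_mul, φX, φY]; decide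
      rw [hφZ, ψ_apply, hZXY]
      simp [show ((1 : ZMod 2)).val = 1 from rfl]
  apply MonoidHom.ext
  intro q
  refine QuotientGroup.induction_on q fun h => ?_
  exact DFunLike.congr_fun H h

end HWaux

theorem stmt8 :
    Nonempty ((HW ⧸ Subgroup.normalClosure {hwx ^ 2, hwy ^ 2, hwz ^ 2}) ≃*
      Multiplicative (ZMod 2 × ZMod 2)) :=
  ⟨MonoidHom.toMulEquiv HWaux.φ HWaux.ψ HWaux.right_inv HWaux.left_inv⟩
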